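/- Let d ≥ 1, let h : {−1,1}^d → ℝ satisfy 0 ≤ h(y) ≤ d for all y, let M ≥ 2d, define f(x) = min(M, h(round(x)) + 2M·g(x)), let R ≥ 1, and let λ > 0 satisfy λM ≥ 4d·ln(24R). Then for every hypercube vertex y ∈ {−1,1}^d, ∫_{B_d(0,R)} exp(−λM) dx ≤ 3^{−d} · ∫_{B(y,1/8)} exp(−λ f(x)) dx; that is, the contribution of the constant level M over the entire ball of radius R is exponentially smaller than the Gibbs mass contributed by a single radius-1/8 ball around any hypercube vertex. -/

import Mathlib

open Real MeasureTheory

/-- The coordinatewise sign vector: `round(x)_i = 1` if `x_i ≥ 0` and `-1` otherwise. -/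
noncomputable def rnd {d : ℕ} (x : EuclideanSpace ℝ (Fin d)) : EuclideanSpace ℝ (Fin d) :=
  WithLp.toLp 2 (fun i => if 0 ≤ x i then (1 : ℝ) else -1)

/-- The continuous extension `f(x) = min(M, h(round x) + 2M·‖x - round x‖)` of a
function `h` on the hypercube vertices. -/
noncomputable def fExt {d : ℕ} (h : EuclideanSpace ℝ (Fin d) → ℝ) (M : ℝ)
    (x : EuclideanSpace ℝ (Fin d)) : ℝ :=
  min M (h (rnd x) + 2 * M * ‖x - rnd x‖)

/-- The hypercube vertex corresponding to a sign pattern `s : Fin d → Bool`. -/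
noncomputable def vtx {d : ℕ} (s : Fin d → Bool) : EuclideanSpace ℝ (Fin d) :=
  WithLp.toLp 2 (fun i => if s i then (1 : ℝ) else -1)

lemma abs_coord_le {d : ℕ} (x : EuclideanSpace ℝ (Fin d)) (i : Fin d) : |x i| ≤ ‖x‖ := by
  rw [EuclideanSpace.norm_eq]
  have h1 : ‖x i‖ ^ 2 ≤ ∑ j, ‖x j‖ ^ 2 :=
    Finset.single_le_sum (f := fun j => ‖x j‖ ^ 2) (fun j _ => sq_nonneg _) (Finset.mem_univ i)
  calc |x i| = Real.sqrt (‖x i‖ ^ 2) := by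
        rw [Real.sqrt_sq (norm_nonneg _), Real.norm_eq_abs]
    _ ≤ _ := Real.sqrt_le_sqrt h1

lemma rnd_eq_vtx {d : ℕ} (s : Fin d → Bool) (x : EuclideanSpace ℝ (Fin d))
    (hx : x ∈ Metric.closedBall (vtx s) (1/8)) : rnd x = vtx s := by
  have hn : ‖x - vtx s‖ ≤ 1/8 := by
    rwa [Metric.mem_closedBall, dist_eq_norm] at hx
  ext i
  have hi : |x i - vtx s i| ≤ 1/8 := by
    have := abs_coord_le (x - vtx s) i
    simpa using this.trans hn
  rw [abs_le] at hi
  simp only [vtx, WithLp.ofLp_toLp] at hi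
  simp only [rnd, vtx, WithLp.ofLp_toLp]
  by_cases hs : s i
  · simp only [hs, if_true] at hi ⊢
    rw [if_pos]; linarith [hi.1]
  · simp only [hs, Bool.false_eq_true, if_false] at hi ⊢
    rw [if_neg]; linarith [hi.2]

/-- If `λM ≥ 4d·ln(24R)`, then the contribution of the constant level
`M` over the whole ball `B_d(0,R)` is at most `3^{-d}` times the Gibbs mass of any
single radius-`1/8` ball around a hypercube vertex. -/
theorem constant_level_contribution_small (d : ℕ) (hd : 1 ≤ d)
    (h : EuclideanSpace ℝ (Fin d) → ℝ)
    (hh : ∀ y : EuclideanSpace ℝ (Fin d), (∀ i, y i = 1 ∨ y i = -1) →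
      0 ≤ h y ∧ h y ≤ (d : ℝ))
    (M : ℝ) (hM : 2 * (d : ℝ) ≤ M)
    (R : ℝ) (hR : 1 ≤ R)
    (lam : ℝ) (hlam : 0 < lam) (hlamM : 4 * (d : ℝ) * Real.log (24 * R) ≤ lam * M) :
    ∀ s : Fin d → Bool,
      (∫ _x in Metric.closedBall (0 : EuclideanSpace ℝ (Fin d)) R,
          Real.exp (-(lam * M))) ≤
        (1 / 3 : ℝ) ^ d *
          ∫ x in Metric.closedBall (vtx s) (1 / 8), Real.exp (-(lam * fExt h M x)) := by
  intro s
  have hd1 : (1:ℝ) ≤ (d:ℝ) := by exact_mod_cast hd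
  have hM0 : (0:ℝ) ≤ M := by linarith
  have hy : ∀ i, vtx s i = 1 ∨ vtx s i = -1 := by
    intro i; simp only [vtx, WithLp.ofLp_toLp]; split <;> simp
  obtain ⟨hC0, hCd⟩ := hh (vtx s) hy
  -- the bound on fExt on the small ball
  have key : ∀ x ∈ Metric.closedBall (vtx s) (1/8),
      min M (h (vtx s) + 2 * M * ‖x - vtx s‖) ≤ 3/4 * M := by
    intro x hx
    have hn : ‖x - vtx s‖ ≤ 1/8 := by rwa [Metric.mem_closedBall, dist_eq_norm] at hx
    have h2 : 2 * M * ‖x - vtx s‖ ≤ 2 * M * (1/8) :=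
      mul_le_mul_of_nonneg_left hn (by positivity)
    calc min M (h (vtx s) + 2 * M * ‖x - vtx s‖) ≤ h (vtx s) + 2 * M * ‖x - vtx s‖ :=
          min_le_right _ _
      _ ≤ 3/4 * M := by linarith
  set G : EuclideanSpace ℝ (Fin d) → ℝ :=
    fun x => Real.exp (-(lam * min M (h (vtx s) + 2 * M * ‖x - vtx s‖))) with hG
  have hGcont : Continuous G := by
    apply Real.continuous_exp.comp
    apply Continuous.neg
    apply continuous_const.mul
    exact continuous_const.min (continuous_const.add
      (continuous_const.mul ((continuous_id.sub continuous_const).norm)))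
  have hcong : (∫ x in Metric.closedBall (vtx s) (1/8), Real.exp (-(lam * fExt h M x)))
      = ∫ x in Metric.closedBall (vtx s) (1/8), G x := by
    apply setIntegral_congr_fun measurableSet_closedBall
    intro x hx
    simp only [hG, fExt, rnd_eq_vtx s x hx]
  have hGint : IntegrableOn G (Metric.closedBall (vtx s) (1/8)) volume :=
    hGcont.continuousOn.integrableOn_compact (isCompact_closedBall _ _)
  -- volumes
  have hvR : volume (Metric.closedBall (0 : EuclideanSpace ℝ (Fin d)) R)
      = ENNReal.ofReal (R ^ d) * volume (Metric.closedBall (0 : EuclideanSpace ℝ (Fin d)) 1) := by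
    have := Measure.addHaar_closedBall' (volume : Measure (EuclideanSpace ℝ (Fin d))) 0
      (le_trans zero_le_one hR)
    simpa [finrank_euclideanSpace_fin] using this
  have hv8 : volume (Metric.closedBall (vtx s) (1/8))
      = ENNReal.ofReal ((1/8 : ℝ) ^ d) * volume (Metric.closedBall (0 : EuclideanSpace ℝ (Fin d)) 1) := by
    have := Measure.addHaar_closedBall' (volume : Measure (EuclideanSpace ℝ (Fin d))) (vtx s)
      (by norm_num : (0:ℝ) ≤ 1/8)
    simpa [finrank_euclideanSpace_fin] using this
  set V : ℝ := (volume (Metric.closedBall (0 : EuclideanSpace ℝ (Fin d)) 1)).toReal with hV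
  have hV0 : 0 ≤ V := ENNReal.toReal_nonneg
  -- scalar inequality
  have h24 : (24 * R) ^ d ≤ Real.exp (lam * M / 4) := by
    rw [show (24 * R) ^ d = Real.exp ((d : ℝ) * Real.log (24 * R)) by
      rw [← Real.log_pow, Real.exp_log (by positivity)]]
    exact Real.exp_le_exp.2 (by linarith)
  have hgoal : R ^ d * Real.exp (-(lam * M)) ≤ (1/24 : ℝ) ^ d * Real.exp (-(lam * (3/4 * M))) := by
    have key2 : R ^ d * Real.exp (-(lam * M)) * 24 ^ d * Real.exp (lam * (3/4 * M)) ≤ 1 := by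
      calc R ^ d * Real.exp (-(lam * M)) * 24 ^ d * Real.exp (lam * (3/4 * M))
          = (24 * R) ^ d * Real.exp (-(lam * M) + lam * (3/4 * M)) := by
            rw [mul_pow, Real.exp_add]; ring
        _ ≤ Real.exp (lam * M / 4) * Real.exp (-(lam * M) + lam * (3/4 * M)) :=
            mul_le_mul_of_nonneg_right h24 (Real.exp_nonneg _)
        _ = 1 := by
            rw [← Real.exp_add, show lam * M / 4 + (-(lam * M) + lam * (3/4 * M)) = 0 by ring,
              Real.exp_zero]
    have h2 : (0:ℝ) < 24 ^ d * Real.exp (lam * (3/4 * M)) := by positivity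
    rw [show (1/24 : ℝ) ^ d * Real.exp (-(lam * (3/4 * M)))
        = 1 / (24 ^ d * Real.exp (lam * (3/4 * M))) by
      rw [one_div_pow, Real.exp_neg, one_div, one_div, mul_inv], le_div_iff₀ h2]
    calc R ^ d * Real.exp (-(lam * M)) * (24 ^ d * Real.exp (lam * (3/4 * M)))
        = R ^ d * Real.exp (-(lam * M)) * 24 ^ d * Real.exp (lam * (3/4 * M)) := by ring
      _ ≤ 1 := key2
  -- lower bound on the Gibbs integral
  have hbound : (1/8 : ℝ) ^ d * V * Real.exp (-(lam * (3/4 * M)))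
      ≤ ∫ x in Metric.closedBall (vtx s) (1/8), Real.exp (-(lam * fExt h M x)) := by
    rw [hcong]
    have hmono : (∫ _x in Metric.closedBall (vtx s) (1/8), Real.exp (-(lam * (3/4 * M))))
        ≤ ∫ x in Metric.closedBall (vtx s) (1/8), G x := by
      apply setIntegral_mono_on
        (integrableOn_const measure_closedBall_lt_top.ne) hGint
        measurableSet_closedBall
      intro x hx
      apply Real.exp_le_exp.2
      have := mul_le_mul_of_nonneg_left (key x hx) hlam.le
      linarith
    calc (1/8 : ℝ) ^ d * V * Real.exp (-(lam * (3/4 * M)))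
        = (volume (Metric.closedBall (vtx s) (1/8))).toReal * Real.exp (-(lam * (3/4 * M))) := by
          rw [hv8, ENNReal.toReal_mul, ENNReal.toReal_ofReal (by positivity)]
      _ = ∫ _x in Metric.closedBall (vtx s) (1/8), Real.exp (-(lam * (3/4 * M))) := by
          rw [setIntegral_const, smul_eq_mul]; rfl
      _ ≤ _ := hmono
  have h38 : (1/3 : ℝ) ^ d * (1/8 : ℝ) ^ d = (1/24 : ℝ) ^ d := by
    rw [← mul_pow]; norm_num
  calc (∫ _x in Metric.closedBall (0 : EuclideanSpace ℝ (Fin d)) R, Real.exp (-(lam * M)))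
      = (volume (Metric.closedBall (0 : EuclideanSpace ℝ (Fin d)) R)).toReal
          * Real.exp (-(lam * M)) := by rw [setIntegral_const, smul_eq_mul]; rfl
    _ = R ^ d * V * Real.exp (-(lam * M)) := by
        rw [hvR, ENNReal.toReal_mul, ENNReal.toReal_ofReal (by positivity)]
    _ = (R ^ d * Real.exp (-(lam * M))) * V := by ring
    _ ≤ ((1/24 : ℝ) ^ d * Real.exp (-(lam * (3/4 * M)))) * V :=
        mul_le_mul_of_nonneg_right hgoal hV0
    _ = (1/3 : ℝ) ^ d * ((1/8 : ℝ) ^ d * V * Real.exp (-(lam * (3/4 * M)))) := by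
        rw [← h38]; ring
    _ ≤ (1/3 : ℝ) ^ d *
          ∫ x in Metric.closedBall (vtx s) (1/8), Real.exp (-(lam * fExt h M x)) :=
        mul_le_mul_of_nonneg_left hbound (by positivity)
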